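/- A function h : (0,∞) → [0,1] is the hockey-stick curve x ↦ H_x(P‖Q) of some pair of probability distributions (P,Q) if and only if h is convex, decreasing, satisfies lim_{x→0} h(x) = 1, and h(x) ≥ 1 − x for all x > 0. -/

import Mathlib

open MeasureTheory Filter Set
open scoped ENNReal NNReal Topology

/-- Hockey-stick divergence `H_x(P‖Q) = sup_E P(E) - x Q(E)` over measurable events. -/
noncomputable def hsDiv {Ω : Type*} [MeasurableSpace Ω] (x : ℝ) (P Q : Measure Ω) : ℝ :=
  ⨆ E : {E : Set Ω // MeasurableSet E}, ((P E).toReal - x * (Q E).toReal)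


section Fwd
variable {Ω : Type} [MeasurableSpace Ω] (P Q : Measure Ω)
  [IsProbabilityMeasure P] [IsProbabilityMeasure Q]

lemma term_le_one (x : ℝ) (hx : 0 < x) (E : {E : Set Ω // MeasurableSet E}) :
    (P E).toReal - x * (Q E).toReal ≤ 1 := by
  have h1 : (P E).toReal ≤ 1 := by
    have := prob_le_one (μ := P) (s := E.1)
    simpa using ENNReal.toReal_mono ENNReal.one_ne_top this
  have h2 : 0 ≤ x * (Q E).toReal := by positivity
  linarith

lemma bdd_term (x : ℝ) (hx : 0 < x) :
    BddAbove (range fun E : {E : Set Ω // MeasurableSet E} =>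
      (P E).toReal - x * (Q E).toReal) :=
  ⟨1, by rintro y ⟨E, rfl⟩; exact term_le_one P Q x hx E⟩

lemma hsDiv_le_one (x : ℝ) (hx : 0 < x) : hsDiv x P Q ≤ 1 :=
  ciSup_le fun E => term_le_one P Q x hx E

lemma hsDiv_ge (x : ℝ) (hx : 0 < x) (E : Set Ω) (hE : MeasurableSet E) :
    (P E).toReal - x * (Q E).toReal ≤ hsDiv x P Q :=
  le_ciSup (bdd_term P Q x hx) ⟨E, hE⟩

lemma hsDiv_nonneg (x : ℝ) (hx : 0 < x) : 0 ≤ hsDiv x P Q := by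
  have := hsDiv_ge P Q x hx ∅ MeasurableSet.empty
  simpa using this

lemma hsDiv_ge_one_sub (x : ℝ) (hx : 0 < x) : 1 - x ≤ hsDiv x P Q := by
  have := hsDiv_ge P Q x hx univ MeasurableSet.univ
  simpa [measure_univ] using this

lemma hsDiv_antitone {x y : ℝ} (hx : 0 < x) (hxy : x ≤ y) :
    hsDiv y P Q ≤ hsDiv x P Q := by
  refine ciSup_le fun E => ?_
  refine le_trans ?_ (hsDiv_ge P Q x hx E.1 E.2)
  have : 0 ≤ (Q E).toReal := ENNReal.toReal_nonneg
  nlinarith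

lemma hsDiv_convex : ConvexOn ℝ (Set.Ioi 0) (fun x => hsDiv x P Q) := by
  refine ⟨convex_Ioi 0, fun x hx y hy a b ha hb hab => ?_⟩
  simp only [smul_eq_mul] at *
  rcases ha.eq_or_lt with rfl | ha'
  · simp only [zero_mul, zero_add]; rw [(by linarith : b = 1)]; simp
  rcases hb.eq_or_lt with rfl | hb'
  · simp only [zero_mul, add_zero]; rw [(by linarith : a = 1)]; simp
  have hxy : 0 < a * x + b * y := by
    have : (0:ℝ) < x := hx
    have : (0:ℝ) < y := hy
    positivity
  refine ciSup_le fun E => ?_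
  have key : (P E).toReal - (a * x + b * y) * (Q E).toReal =
      a * ((P E).toReal - x * (Q E).toReal) + b * ((P E).toReal - y * (Q E).toReal) := by
    have : a + b = 1 := hab
    nlinarith [ENNReal.toReal_nonneg (a := P E)]
  rw [key]
  gcongr
  · exact hsDiv_ge P Q x hx E.1 E.2
  · exact hsDiv_ge P Q y hy E.1 E.2

end Fwd


section Bwd
variable {h : ℝ → ℝ}

/-- negative of the right derivative of `h` -/
noncomputable def mder (h : ℝ → ℝ) (t : ℝ) : ℝ := -sInf (slope h t '' Ioi t)

/-- the limit of `h` at infinity -/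
noncomputable def sfun (h : ℝ → ℝ) : ℝ := sInf (h '' Ioi 0)

/-- decreasing rearrangement density -/
noncomputable def pfun (h : ℝ → ℝ) (u : ℝ) : ℝ := sSup {t : ℝ | 0 < t ∧ u < mder h t}

/-- right-continuous version of `mder` -/
noncomputable def Mfun (h : ℝ → ℝ) (c : ℝ) : ℝ := sSup (mder h '' Ioi c)

lemma slope_mono (hcvx : ConvexOn ℝ (Ioi 0) h) {t a b : ℝ} (ht : 0 < t) (ha : 0 < a)
    (hb : 0 < b) (hat : a ≠ t) (hbt : b ≠ t) (hab : a ≤ b) : slope h t a ≤ slope h t b := by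
  rw [slope_def_field, slope_def_field]
  exact hcvx.secant_mono ht ha hb hat hbt hab

variable (hcvx : ConvexOn ℝ (Ioi 0) h) (hant : AntitoneOn h (Ioi 0))
  (hlim : Tendsto h (nhdsWithin 0 (Ioi 0)) (nhds 1))
  (hbnd : ∀ x > 0, h x ∈ Icc (0:ℝ) 1 ∧ 1 - x ≤ h x)

include hcvx hlim hbnd in
lemma neg_one_le_slope {t y : ℝ} (ht : 0 < t) (hty : t < y) : -1 ≤ slope h t y := by
  have hy : 0 < y := ht.trans hty
  have key : (h y - 1) / y ≤ slope h t y := by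
    have ev : ∀ᶠ z in nhdsWithin 0 (Ioi 0), slope h y z ≤ slope h y t := by
      filter_upwards [Ioo_mem_nhdsGT_of_mem (by constructor <;> simp [ht] : (0:ℝ) ∈ Ico 0 t)]
        with z hz
      exact slope_mono hcvx hy hz.1 ht (ne_of_lt (hz.2.trans hty)) hty.ne hz.2.le
    have tz : Tendsto (fun z => slope h y z) (nhdsWithin 0 (Ioi 0)) (𝓝 ((1 - h y) / (0 - y))) := by
      have h1 : Tendsto (fun z : ℝ => h z - h y) (nhdsWithin 0 (Ioi 0)) (𝓝 (1 - h y)) :=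
        hlim.sub_const _
      have h2 : Tendsto (fun z : ℝ => z - y) (nhdsWithin 0 (Ioi 0)) (𝓝 (0 - y)) :=
        (tendsto_id.mono_left nhdsWithin_le_nhds).sub_const _
      have := h1.div h2 (by simpa using hy.ne')
      simpa [slope_def_field, Pi.div_def] using this
    have := le_of_tendsto tz ev
    calc (h y - 1) / y = (1 - h y) / (0 - y) := by ring_nf
    _ ≤ slope h y t := this
    _ = slope h t y := slope_comm h y t
  have h2 : -1 ≤ (h y - 1) / y := by
    rw [le_div_iff₀ hy]
    linarith [(hbnd y hy).2]
  linarith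

include hcvx hlim hbnd in
lemma bddBelow_slopes {t : ℝ} (ht : 0 < t) : BddBelow (slope h t '' Ioi t) := by
  refine ⟨-1, ?_⟩
  rintro _ ⟨y, hy, rfl⟩
  exact neg_one_le_slope hcvx hlim hbnd ht hy

include hcvx hlim hbnd in
lemma mder_le_one {t : ℝ} (ht : 0 < t) : mder h t ≤ 1 := by
  have : -1 ≤ sInf (slope h t '' Ioi t) := by
    refine le_csInf ⟨slope h t (t+1), mem_image_of_mem _ (by simp [ht] : t + 1 ∈ Ioi t)⟩ ?_
    rintro _ ⟨y, hy, rfl⟩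
    exact neg_one_le_slope hcvx hlim hbnd ht hy
  simp only [mder]
  linarith

include hcvx hlim hbnd hant in
lemma mder_nonneg {t : ℝ} (ht : 0 < t) : 0 ≤ mder h t := by
  have h1 : sInf (slope h t '' Ioi t) ≤ slope h t (t+1) :=
    csInf_le (bddBelow_slopes hcvx hlim hbnd ht)
      (mem_image_of_mem _ (by simp [ht] : t + 1 ∈ Ioi t))
  have h2 : slope h t (t+1) ≤ 0 := by
    rw [slope_def_field]
    have := hant (mem_Ioi.2 ht) (mem_Ioi.2 (by linarith : (0:ℝ) < t + 1)) (by linarith : t ≤ t + 1)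
    have ht1 : t + 1 - t = 1 := by ring
    rw [ht1, div_one]
    linarith
  simp only [mder]
  linarith

include hcvx hlim hbnd in
lemma mder_le_inv {t : ℝ} (ht : 0 < t) : mder h t ≤ 2 / t := by
  have hh : 0 < t / 2 := by linarith
  have h1 : slope h t (t/2) ≤ sInf (slope h t '' Ioi t) := by
    refine le_csInf ⟨slope h t (t+1), mem_image_of_mem _ (by simp [ht] : t + 1 ∈ Ioi t)⟩ ?_
    rintro _ ⟨y, hy, rfl⟩
    exact slope_mono hcvx ht hh (ht.trans hy) (by linarith) (ne_of_gt hy) (by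
      simp only [mem_Ioi] at hy; linarith)
  have h2 : -slope h t (t/2) ≤ 2 / t := by
    rw [slope_def_field]
    have hb1 : h (t/2) ≤ 1 := (hbnd _ hh).1.2
    have hb0 : 0 ≤ h t := (hbnd _ ht).1.1
    rw [show t/2 - t = -(t/2) by ring, div_neg, neg_neg]
    rw [div_le_div_iff₀ hh ht]
    nlinarith
  simp only [mder]
  linarith

include hcvx hlim hbnd in
lemma mder_anti {t₁ t₂ : ℝ} (ht₁ : 0 < t₁) (h12 : t₁ ≤ t₂) : mder h t₂ ≤ mder h t₁ := by
  have ht₂ : 0 < t₂ := lt_of_lt_of_le ht₁ h12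
  have : sInf (slope h t₁ '' Ioi t₁) ≤ sInf (slope h t₂ '' Ioi t₂) := by
    refine le_csInf ⟨slope h t₂ (t₂+1), mem_image_of_mem _ (by simp [ht₂] : t₂ + 1 ∈ Ioi t₂)⟩ ?_
    rintro _ ⟨y, hy, rfl⟩
    simp only [mem_Ioi] at hy
    have hy0 : 0 < y := ht₂.trans hy
    have step1 : slope h t₁ y ≤ slope h t₂ y := by
      rw [slope_comm h t₁ y, slope_comm h t₂ y]
      exact slope_mono hcvx hy0 ht₁ ht₂ (by linarith) (by linarith) h12
    refine le_trans (csInf_le (bddBelow_slopes hcvx hlim hbnd ht₁)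
      (mem_image_of_mem _ (by simp only [mem_Ioi]; linarith : y ∈ Ioi t₁))) step1
  simp only [mder]
  linarith

include hcvx hlim hbnd in
lemma mder_hasDeriv {t : ℝ} (ht : 0 < t) : HasDerivWithinAt h (-(mder h t)) (Ioi t) t := by
  rw [hasDerivWithinAt_iff_tendsto_slope' self_notMem_Ioi]
  have : -(mder h t) = sInf (slope h t '' Ioi t) := by simp [mder]
  rw [this]
  refine MonotoneOn.tendsto_nhdsGT ?_ (bddBelow_slopes hcvx hlim hbnd ht)
  intro a ha b hb hab
  exact slope_mono hcvx ht (ht.trans ha) (ht.trans hb) (ne_of_gt ha) (ne_of_gt hb) hab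

include hcvx hant hlim hbnd in
lemma mder_integrableOn {x b : ℝ} (hx : 0 < x) (hxb : x ≤ b) :
    IntegrableOn (fun t => mder h (max t x)) (Ioc x b) volume := by
  have hmeas : Measurable (fun t => mder h (max t x)) := by
    have hanti : Antitone (fun t => mder h (max t x)) := fun a b hab =>
      mder_anti hcvx hlim hbnd (lt_max_of_lt_right hx) (max_le_max hab le_rfl)
    exact hanti.measurable
  refine Integrable.mono' (integrable_const 1) hmeas.aestronglyMeasurable ?_
  · refine ae_of_all _ fun t => ?_
    have h0 : 0 < max t x := lt_max_of_lt_right hx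
    rw [Real.norm_eq_abs, abs_le]
    constructor
    · linarith [mder_nonneg hcvx hant hlim hbnd h0]
    · exact mder_le_one hcvx hlim hbnd h0

include hcvx hant hlim hbnd in
lemma mder_ftc {x b : ℝ} (hx : 0 < x) (hxb : x ≤ b) :
    ∫ t in x..b, mder h t = h x - h b := by
  have hint : IntervalIntegrable (fun t => mder h t) volume x b := by
    rw [intervalIntegrable_iff_integrableOn_Ioc_of_le hxb]
    refine (mder_integrableOn hcvx hant hlim hbnd hx hxb).congr_fun ?_ measurableSet_Ioc
    intro t htm
    simp [max_eq_left htm.1.le]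
  have hcont : ContinuousOn h (Icc x b) :=
    (hcvx.continuousOn isOpen_Ioi).mono (fun z hz => lt_of_lt_of_le hx hz.1)
  have := intervalIntegral.integral_eq_sub_of_hasDeriv_right_of_le hxb hcont
    (fun t htm => mder_hasDeriv hcvx hlim hbnd (hx.trans htm.1)) hint.neg
  rw [intervalIntegral.integral_neg] at this
  linarith

include hant hbnd in
lemma sfun_le {y : ℝ} (hy : 0 < y) : sfun h ≤ h y :=
  csInf_le ⟨0, by rintro _ ⟨z, hz, rfl⟩; exact (hbnd z hz).1.1⟩ (mem_image_of_mem _ hy)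

include hbnd in
lemma sfun_nonneg : 0 ≤ sfun h :=
  le_csInf ⟨h 1, mem_image_of_mem _ (by norm_num)⟩ (by rintro _ ⟨z, hz, rfl⟩; exact (hbnd z hz).1.1)

include hant hbnd in
lemma h_tendsto_sfun {x : ℝ} (hx : 0 < x) :
    Tendsto (fun n : ℕ => h (x + (n + 1))) atTop (𝓝 (sfun h)) := by
  have hmem : ∀ n : ℕ, (0:ℝ) < x + (n + 1) := fun n => by positivity
  have hanti : Antitone (fun n : ℕ => h (x + (n + 1))) := by
    intro a b hab
    exact hant (mem_Ioi.2 (hmem a)) (mem_Ioi.2 (hmem b)) (by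
      have : (a:ℝ) ≤ b := Nat.cast_le.2 hab
      linarith)
  have hbdd : BddBelow (range fun n : ℕ => h (x + (n + 1))) :=
    ⟨0, by rintro _ ⟨n, rfl⟩; exact (hbnd _ (hmem n)).1.1⟩
  have := tendsto_atTop_ciInf hanti hbdd
  have heq : ⨅ n : ℕ, h (x + (n + 1)) = sfun h := by
    refine le_antisymm ?_ ?_
    · refine le_csInf ⟨h 1, mem_image_of_mem _ (by norm_num)⟩ ?_
      rintro _ ⟨y, hy, rfl⟩
      obtain ⟨n, hn⟩ := exists_nat_ge y
      refine le_trans (ciInf_le hbdd n) ?_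
      exact hant hy (mem_Ioi.2 (hmem n)) (by linarith)
    · exact le_ciInf fun n => sfun_le hant hbnd (hmem n)
  rwa [heq] at this

include hcvx hant hlim hbnd in
lemma lint_mder_Ioi {x : ℝ} (hx : 0 < x) :
    ∫⁻ t in Ioi x, ENNReal.ofReal (mder h t) = ENNReal.ofReal (h x - sfun h) := by
  set mx := fun t => mder h (max t x) with hmx
  have hanti : Antitone mx := fun a b hab =>
    mder_anti hcvx hlim hbnd (lt_max_of_lt_right hx) (max_le_max hab le_rfl)
  have hmeas : Measurable mx := hanti.measurable
  have congr1 : ∫⁻ t in Ioi x, ENNReal.ofReal (mder h t)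
      = ∫⁻ t in Ioi x, ENNReal.ofReal (mx t) := by
    refine setLIntegral_congr_fun measurableSet_Ioi (fun t htm => ?_)
    simp [hmx, max_eq_left (le_of_lt (mem_Ioi.1 htm))]
  rw [congr1]
  set μx := volume.withDensity (fun t => ENNReal.ofReal (mx t)) with hμx
  have happ : ∀ s : Set ℝ, MeasurableSet s → μx s = ∫⁻ t in s, ENNReal.ofReal (mx t) :=
    fun s hs => withDensity_apply _ hs
  have hIoc : ∀ n : ℕ, μx (Ioc x (x + (n+1))) = ENNReal.ofReal (h x - h (x + (n+1))) := by
    intro n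
    have hxb : x ≤ x + (n+1) := by
      have : (0:ℝ) ≤ (n:ℝ) := Nat.cast_nonneg n
      linarith
    rw [happ _ measurableSet_Ioc]
    have hInt : IntegrableOn mx (Ioc x (x + (n+1))) volume :=
      mder_integrableOn hcvx hant hlim hbnd hx hxb
    have hnn : 0 ≤ᵐ[volume.restrict (Ioc x (x + (n+1)))] mx :=
      ae_of_all _ fun t => mder_nonneg hcvx hant hlim hbnd (lt_max_of_lt_right hx)
    rw [← ofReal_integral_eq_lintegral_ofReal hInt hnn]
    congr 1
    rw [← intervalIntegral.integral_of_le hxb]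
    rw [← mder_ftc hcvx hant hlim hbnd hx hxb]
    refine intervalIntegral.integral_congr fun t htm => ?_
    rw [uIcc_of_le hxb] at htm
    simp [hmx, max_eq_left htm.1]
  have hunion : Ioi x = ⋃ n : ℕ, Ioc x (x + (n+1)) := by
    ext t
    simp only [mem_Ioi, mem_iUnion, mem_Ioc]
    constructor
    · intro htx
      obtain ⟨n, hn⟩ := exists_nat_ge (t - x)
      exact ⟨n, htx, by linarith⟩
    · rintro ⟨n, h1, _⟩; exact h1
  have hmono : Monotone fun n : ℕ => Ioc x (x + (n+1)) := by
    intro a b hab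
    refine Ioc_subset_Ioc_right (by
      have : (a:ℝ) ≤ b := Nat.cast_le.2 hab
      linarith)
  have ht1 : Tendsto (fun n : ℕ => μx (Ioc x (x + (n+1)))) atTop (𝓝 (μx (Ioi x))) := by
    rw [hunion]
    exact tendsto_measure_iUnion_atTop hmono
  have ht2 : Tendsto (fun n : ℕ => μx (Ioc x (x + (n+1)))) atTop
      (𝓝 (ENNReal.ofReal (h x - sfun h))) := by
    simp only [hIoc]
    exact ENNReal.tendsto_ofReal (tendsto_const_nhds.sub (h_tendsto_sfun hant hbnd hx))
  have := tendsto_nhds_unique ht1 ht2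
  rw [← happ _ measurableSet_Ioi, this]

lemma ofReal_max0 (a : ℝ) : ENNReal.ofReal (max a 0) = ENNReal.ofReal a := by
  rcases le_total a 0 with ha | ha
  · rw [max_eq_right ha, ENNReal.ofReal_eq_zero.2 ha]; simp
  · rw [max_eq_left ha]

include hcvx hant hlim hbnd in
lemma Mfun_le_one {c : ℝ} (hc : 0 < c) : Mfun h c ≤ 1 := by
  refine csSup_le ⟨mder h (c+1), mem_image_of_mem _ (by simp [hc] : c + 1 ∈ Ioi c)⟩ ?_
  rintro _ ⟨t, htm, rfl⟩
  exact mder_le_one hcvx hlim hbnd (hc.trans htm)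

include hcvx hant hlim hbnd in
lemma Mfun_nonneg {c : ℝ} (hc : 0 < c) : 0 ≤ Mfun h c := by
  refine le_csSup ?_ (mem_image_of_mem _ (by simp [hc] : c + 1 ∈ Ioi c)) |>.trans' ?_
  · refine ⟨1, ?_⟩
    rintro _ ⟨t, htm, rfl⟩
    exact mder_le_one hcvx hlim hbnd (hc.trans htm)
  · exact mder_nonneg hcvx hant hlim hbnd (by linarith)

include hcvx hant hlim hbnd in
lemma pfun_lt_iff {u c : ℝ} (hu : 0 < u) (hc : 0 < c) :
    c < pfun h u ↔ u < Mfun h c := by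
  have hbddS : BddAbove {t : ℝ | 0 < t ∧ u < mder h t} := by
    refine ⟨2 / u, ?_⟩
    rintro t ⟨ht0, htu⟩
    have h2 : mder h t ≤ 2 / t := mder_le_inv hcvx hlim hbnd ht0
    have : u < 2 / t := lt_of_lt_of_le htu h2
    rw [lt_div_iff₀ ht0] at this
    rw [le_div_iff₀ hu]
    nlinarith
  have hbddM : BddAbove (mder h '' Ioi c) := by
    refine ⟨1, ?_⟩
    rintro _ ⟨t, htm, rfl⟩
    exact mder_le_one hcvx hlim hbnd (hc.trans htm)
  constructor
  · intro hlt
    have hne : {t : ℝ | 0 < t ∧ u < mder h t}.Nonempty := by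
      by_contra hemp
      rw [not_nonempty_iff_eq_empty] at hemp
      rw [pfun, hemp, Real.sSup_empty] at hlt
      linarith
    obtain ⟨t, htmem, hct⟩ := exists_lt_of_lt_csSup hne hlt
    exact lt_of_lt_of_le htmem.2 (le_csSup hbddM (mem_image_of_mem _ hct))
  · intro hlt
    obtain ⟨_, ⟨t, htm, rfl⟩, hut⟩ := exists_lt_of_lt_csSup
      ⟨mder h (c+1), mem_image_of_mem _ (by simp [hc] : c + 1 ∈ Ioi c)⟩ hlt
    exact lt_of_lt_of_le htm (le_csSup hbddS ⟨hc.trans htm, hut⟩)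

include hcvx hant hlim hbnd in
lemma vol_level {c : ℝ} (hc : 0 < c) :
    volume {u : ℝ | u ∈ Ioo (0:ℝ) 1 ∧ c < pfun h u} = ENNReal.ofReal (Mfun h c) := by
  have hM1 : Mfun h c ≤ 1 := Mfun_le_one hcvx hant hlim hbnd hc
  have hset : {u : ℝ | u ∈ Ioo (0:ℝ) 1 ∧ c < pfun h u} = Ioo 0 (Mfun h c) := by
    ext u
    simp only [mem_setOf_eq, mem_Ioo]
    constructor
    · rintro ⟨⟨hu0, _⟩, hcp⟩
      exact ⟨hu0, (pfun_lt_iff hcvx hant hlim hbnd hu0 hc).1 hcp⟩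
    · rintro ⟨hu0, huM⟩
      exact ⟨⟨hu0, lt_of_lt_of_le huM hM1⟩, (pfun_lt_iff hcvx hant hlim hbnd hu0 hc).2 huM⟩
  rw [hset, Real.volume_Ioo, sub_zero]

include hcvx hant hlim hbnd in
lemma pfun_anti : AntitoneOn (pfun h) (Ioi 0) := by
  intro u₁ hu₁ u₂ hu₂ h12
  simp only [mem_Ioi] at hu₁ hu₂
  have hbdd1 : BddAbove {t : ℝ | 0 < t ∧ u₁ < mder h t} := by
    refine ⟨2 / u₁, ?_⟩
    rintro t ⟨ht0, htu⟩
    have h2 : mder h t ≤ 2 / t := mder_le_inv hcvx hlim hbnd ht0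
    have : u₁ < 2 / t := lt_of_lt_of_le htu h2
    rw [lt_div_iff₀ ht0] at this
    rw [le_div_iff₀ hu₁]
    nlinarith
  rcases eq_empty_or_nonempty {t : ℝ | 0 < t ∧ u₂ < mder h t} with hemp | hne
  · rw [pfun, hemp, Real.sSup_empty]
    rcases eq_empty_or_nonempty {t : ℝ | 0 < t ∧ u₁ < mder h t} with hemp1 | hne1
    · rw [pfun, hemp1, Real.sSup_empty]
    · obtain ⟨t, ht0, htu⟩ := hne1
      exact le_trans (le_of_lt ht0) (le_csSup hbdd1 ⟨ht0, htu⟩)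
  · refine csSup_le_csSup hbdd1 hne ?_
    rintro t ⟨ht0, htu⟩
    exact ⟨ht0, lt_of_le_of_lt h12 htu⟩

/-- indicator version of pfun, globally measurable -/
noncomputable def pInd (h : ℝ → ℝ) : ℝ → ℝ := (Ioo (0:ℝ) 1).indicator (pfun h)

include hcvx hant hlim hbnd in
lemma pInd_nonneg (u : ℝ) : 0 ≤ pInd h u := by
  rw [pInd]
  rcases em (u ∈ Ioo (0:ℝ) 1) with hu | hu
  · rw [indicator_of_mem hu]
    rcases eq_empty_or_nonempty {t : ℝ | 0 < t ∧ u < mder h t} with hemp | hne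
    · rw [pfun, hemp, Real.sSup_empty]
    · obtain ⟨t, ht0, htu⟩ := hne
      refine le_trans (le_of_lt ht0) (le_csSup ?_ ⟨ht0, htu⟩)
      refine ⟨2 / u, ?_⟩
      rintro t' ⟨ht0', htu'⟩
      have h2 : mder h t' ≤ 2 / t' := mder_le_inv hcvx hlim hbnd ht0'
      have h3 : u < 2 / t' := lt_of_lt_of_le htu' h2
      rw [lt_div_iff₀ ht0'] at h3
      rw [le_div_iff₀ hu.1]
      nlinarith
  · rw [indicator_of_notMem hu]

include hcvx hant hlim hbnd in
lemma pInd_measurable : Measurable (pInd h) := by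
  refine measurable_of_Ioi fun a => ?_
  rcases lt_or_ge a 0 with ha | ha
  · have : pInd h ⁻¹' Ioi a = (Ioo (0:ℝ) 1)ᶜ ∪ {u | u ∈ Ioo (0:ℝ) 1 ∧ a < pfun h u} := by
      ext u
      simp only [mem_preimage, mem_Ioi, mem_union, mem_compl_iff, mem_setOf_eq, pInd]
      rcases em (u ∈ Ioo (0:ℝ) 1) with hu | hu
      · simp [hu, indicator_of_mem hu]
      · simp [hu, indicator_of_notMem hu, ha]
    rw [this]
    refine (measurableSet_Ioo.compl).union ?_
    refine Set.OrdConnected.measurableSet ?_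
    constructor
    rintro u₁ ⟨hu₁, ha₁⟩ u₂ ⟨hu₂, ha₂⟩ z hz
    refine ⟨⟨lt_of_lt_of_le hu₁.1 hz.1, lt_of_le_of_lt hz.2 hu₂.2⟩, ?_⟩
    exact lt_of_lt_of_le ha₂ (pfun_anti hcvx hant hlim hbnd
      (mem_Ioi.2 (lt_of_lt_of_le hu₁.1 hz.1)) (mem_Ioi.2 hu₂.1) hz.2)
  · have : pInd h ⁻¹' Ioi a = {u | u ∈ Ioo (0:ℝ) 1 ∧ a < pfun h u} := by
      ext u
      simp only [mem_preimage, mem_Ioi, mem_setOf_eq, pInd]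
      rcases em (u ∈ Ioo (0:ℝ) 1) with hu | hu
      · simp [hu, indicator_of_mem hu]
      · simp only [indicator_of_notMem hu]
        constructor
        · intro h0; linarith
        · rintro ⟨hmem, _⟩; exact absurd hmem hu
    rw [this]
    refine Set.OrdConnected.measurableSet ?_
    constructor
    rintro u₁ ⟨hu₁, ha₁⟩ u₂ ⟨hu₂, ha₂⟩ z hz
    refine ⟨⟨lt_of_lt_of_le hu₁.1 hz.1, lt_of_le_of_lt hz.2 hu₂.2⟩, ?_⟩
    exact lt_of_lt_of_le ha₂ (pfun_anti hcvx hant hlim hbnd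
      (mem_Ioi.2 (lt_of_lt_of_le hu₁.1 hz.1)) (mem_Ioi.2 hu₂.1) hz.2)

include hcvx hant hlim hbnd in
lemma Mfun_anti {c₁ c₂ : ℝ} (hc₁ : 0 < c₁) (h12 : c₁ ≤ c₂) : Mfun h c₂ ≤ Mfun h c₁ := by
  refine csSup_le_csSup ?_ ⟨mder h (c₂+1), mem_image_of_mem _ (by
      simp only [mem_Ioi]; linarith : c₂ + 1 ∈ Ioi c₂)⟩
    (image_mono (Ioi_subset_Ioi h12))
  refine ⟨1, ?_⟩
  rintro _ ⟨t, htm, rfl⟩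
  exact mder_le_one hcvx hlim hbnd (hc₁.trans htm)

include hcvx hant hlim hbnd in
lemma Mfun_eq_mder_ae {x : ℝ} (hx : 0 < x) :
    ∫⁻ t in Ioi x, ENNReal.ofReal (Mfun h t) = ∫⁻ t in Ioi x, ENNReal.ofReal (mder h t) := by
  set mg := fun t => mder h (max t x) with hmg
  have hanti : Antitone mg := fun a b hab =>
    mder_anti hcvx hlim hbnd (lt_max_of_lt_right hx) (max_le_max hab le_rfl)
  have key : ∀ t, x < t → ContinuousAt mg t → Mfun h t = mder h t := by
    intro t htx hcont
    have ht0 : 0 < t := hx.trans htx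
    refine le_antisymm ?_ ?_
    · refine csSup_le ⟨mder h (t+1), mem_image_of_mem _ (by
        simp only [mem_Ioi]; linarith : t + 1 ∈ Ioi t)⟩ ?_
      rintro _ ⟨t', ht'm, rfl⟩
      exact mder_anti hcvx hlim hbnd ht0 (le_of_lt ht'm)
    · have htend : Tendsto mg (nhdsWithin t (Ioi t)) (𝓝 (mg t)) :=
        (hcont.tendsto).mono_left nhdsWithin_le_nhds
      have hmgt : mg t = mder h t := by rw [hmg]; simp [max_eq_left htx.le]
      rw [← hmgt]
      refine le_of_tendsto htend ?_
      filter_upwards [self_mem_nhdsWithin] with t' ht'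
      have : mg t' = mder h t' := by rw [hmg]; simp [max_eq_left (htx.trans ht').le]
      rw [this]
      refine le_csSup ?_ (mem_image_of_mem _ ht')
      refine ⟨1, ?_⟩
      rintro _ ⟨t'', ht''m, rfl⟩
      exact mder_le_one hcvx hlim hbnd (ht0.trans ht''m)
  have hae : ∀ᵐ t ∂(volume : Measure ℝ), ContinuousAt mg t := by
    rw [ae_iff]
    exact Set.Countable.measure_zero hanti.countable_not_continuousAt _
  refine setLIntegral_congr_fun_ae measurableSet_Ioi ?_
  filter_upwards [hae] with t hcont htm
  rw [key t htm hcont]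

include hcvx hant hlim hbnd in
lemma layer_cake {x : ℝ} (hx : 0 < x) :
    ∫⁻ u in Ioo (0:ℝ) 1, ENNReal.ofReal (pInd h u - x)
      = ENNReal.ofReal (h x - sfun h) := by
  have hmeasf : Measurable (fun u => max (pInd h u - x) 0) :=
    ((pInd_measurable hcvx hant hlim hbnd).sub measurable_const).max measurable_const
  have step1 : ∫⁻ u in Ioo (0:ℝ) 1, ENNReal.ofReal (pInd h u - x)
      = ∫⁻ u in Ioo (0:ℝ) 1, ENNReal.ofReal (max (pInd h u - x) 0) := by
    refine lintegral_congr fun u => ?_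
    rw [ofReal_max0]
  rw [step1]
  have lc := lintegral_eq_lintegral_meas_lt (volume.restrict (Ioo (0:ℝ) 1))
    (f := fun u => max (pInd h u - x) 0)
    (ae_of_all _ fun u => le_max_right _ _) hmeasf.aemeasurable.restrict
  rw [lc]
  have step2 : ∫⁻ t in Ioi (0:ℝ), (volume.restrict (Ioo (0:ℝ) 1)) {a | t < max (pInd h a - x) 0}
      = ∫⁻ t in Ioi (0:ℝ), ENNReal.ofReal (Mfun h (x + t)) := by
    refine setLIntegral_congr_fun measurableSet_Ioi (fun t ht => ?_)
    simp only [mem_Ioi] at ht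
    have hms : MeasurableSet {a : ℝ | t < max (pInd h a - x) 0} := hmeasf measurableSet_Ioi
    rw [Measure.restrict_apply hms]
    have hseteq : {a | t < max (pInd h a - x) 0} ∩ Ioo (0:ℝ) 1
        = {u : ℝ | u ∈ Ioo (0:ℝ) 1 ∧ (x + t) < pfun h u} := by
      ext u
      simp only [mem_inter_iff, mem_setOf_eq]
      constructor
      · rintro ⟨hlt, hu⟩
        rw [pInd, indicator_of_mem hu] at hlt
        have hkey : t < pfun h u - x := by
          rcases le_or_gt (pfun h u - x) 0 with hc | hc
          · rw [max_eq_right hc] at hlt; linarith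
          · rwa [max_eq_left hc.le] at hlt
        exact ⟨hu, by linarith⟩
      · rintro ⟨hu, hlt⟩
        refine ⟨?_, hu⟩
        rw [pInd, indicator_of_mem hu]
        have : t < pfun h u - x := by linarith
        exact lt_max_of_lt_left this
    rw [hseteq, vol_level hcvx hant hlim hbnd (by linarith)]
  rw [step2]
  set Mg := fun t => Mfun h (max t x) with hMg
  have hanti : Antitone Mg := fun a b hab =>
    Mfun_anti hcvx hant hlim hbnd (lt_max_of_lt_right hx) (max_le_max hab le_rfl)
  have hMgm : Measurable fun t => ENNReal.ofReal (Mg t) :=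
    ENNReal.measurable_ofReal.comp hanti.measurable
  have step3 : ∫⁻ t in Ioi (0:ℝ), ENNReal.ofReal (Mfun h (x + t))
      = ∫⁻ t in Ioi (0:ℝ), ENNReal.ofReal (Mg (x + t)) := by
    refine setLIntegral_congr_fun measurableSet_Ioi (fun t ht => ?_)
    simp only [mem_Ioi] at ht
    rw [hMg]
    simp only
    rw [max_eq_left (by linarith : x ≤ x + t)]
  have hmap : Measure.map (fun t : ℝ => x + t) volume = volume :=
    map_add_left_eq_self volume x
  have step4 : ∫⁻ t in Ioi x, ENNReal.ofReal (Mg t)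
      = ∫⁻ t in Ioi (0:ℝ), ENNReal.ofReal (Mg (x + t)) := by
    conv_lhs => rw [← hmap]
    rw [setLIntegral_map measurableSet_Ioi hMgm (measurable_const_add x)]
    have : (fun t : ℝ => x + t) ⁻¹' Ioi x = Ioi (0:ℝ) := by
      ext t; simp
    rw [this]
  have step5 : ∫⁻ t in Ioi x, ENNReal.ofReal (Mg t)
      = ∫⁻ t in Ioi x, ENNReal.ofReal (Mfun h t) := by
    refine setLIntegral_congr_fun measurableSet_Ioi (fun t ht => ?_)
    simp only [mem_Ioi] at ht
    rw [hMg]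
    simp only
    rw [max_eq_left ht.le]
  rw [step3, ← step4, step5, Mfun_eq_mder_ae hcvx hant hlim hbnd hx,
    lint_mder_Ioi hcvx hant hlim hbnd hx]

include hcvx hant hlim hbnd in
lemma total_mass :
    ∫⁻ u in Ioo (0:ℝ) 1, ENNReal.ofReal (pInd h u) = ENNReal.ofReal (1 - sfun h) := by
  set fn := fun (n : ℕ) (u : ℝ) => ENNReal.ofReal (pInd h u - 1/(n+1)) with hfn
  have hmono : Monotone fn := by
    intro n m hnm u
    refine ENNReal.ofReal_le_ofReal (sub_le_sub_left ?_ _)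
    refine one_div_le_one_div_of_le (by positivity) ?_
    have : (n:ℝ) ≤ m := Nat.cast_le.2 hnm
    linarith
  have hpt : ∀ u, ⨆ n, fn n u = ENNReal.ofReal (pInd h u) := by
    intro u
    have t1 : Tendsto (fun n : ℕ => pInd h u - 1/(n+1)) atTop (𝓝 (pInd h u - 0)) :=
      tendsto_const_nhds.sub tendsto_one_div_add_atTop_nhds_zero_nat
    rw [sub_zero] at t1
    have t2 := ENNReal.tendsto_ofReal t1
    have t3 := tendsto_atTop_iSup (fun n m hnm => hmono hnm u)
    exact tendsto_nhds_unique t3 t2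
  have hmeasn : ∀ n : ℕ, Measurable (fn n) := fun n =>
    ENNReal.measurable_ofReal.comp ((pInd_measurable hcvx hant hlim hbnd).sub measurable_const)
  have step1 : ∫⁻ u in Ioo (0:ℝ) 1, ENNReal.ofReal (pInd h u)
      = ⨆ n, ∫⁻ u in Ioo (0:ℝ) 1, fn n u := by
    rw [← lintegral_iSup hmeasn hmono]
    exact lintegral_congr fun u => (hpt u).symm
  have step2 : ∀ n : ℕ, ∫⁻ u in Ioo (0:ℝ) 1, fn n u
      = ENNReal.ofReal (h (1/(n+1)) - sfun h) := fun n =>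
    layer_cake hcvx hant hlim hbnd (by positivity)
  rw [step1]
  simp only [step2]
  have hmono2 : Monotone fun n : ℕ => ENNReal.ofReal (h (1/(n+1)) - sfun h) := by
    intro n m hnm
    refine ENNReal.ofReal_le_ofReal (sub_le_sub_right ?_ _)
    refine hant (mem_Ioi.2 (by positivity)) (mem_Ioi.2 (by positivity)) ?_
    refine one_div_le_one_div_of_le (by positivity) ?_
    have : (n:ℝ) ≤ m := Nat.cast_le.2 hnm
    linarith
  have t3 := tendsto_atTop_iSup hmono2
  have t4 : Tendsto (fun n : ℕ => ENNReal.ofReal (h (1/(n+1)) - sfun h)) atTop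
      (𝓝 (ENNReal.ofReal (1 - sfun h))) := by
    refine ENNReal.tendsto_ofReal (Tendsto.sub_const ?_ _)
    refine hlim.comp ?_
    rw [tendsto_nhdsWithin_iff]
    exact ⟨tendsto_one_div_add_atTop_nhds_zero_nat,
      Eventually.of_forall fun n => mem_Ioi.2 (by positivity)⟩
  exact tendsto_nhds_unique t3 t4

lemma ofReal_le_sub_add (a x : ℝ) (hx : 0 ≤ x) :
    ENNReal.ofReal a ≤ ENNReal.ofReal (a - x) + ENNReal.ofReal x := by
  rw [← ofReal_max0 (a - x), ← ENNReal.ofReal_add (le_max_right _ _) hx]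
  refine ENNReal.ofReal_le_ofReal ?_
  rcases le_total (a - x) 0 with hc | hc
  · rw [max_eq_right hc]; linarith
  · rw [max_eq_left hc]; linarith

/-- the measure `P` realizing `h` -/
noncomputable def Pmeas (h : ℝ → ℝ) : Measure ℝ :=
  (volume.restrict (Ioo (0:ℝ) 1)).withDensity (fun u => ENNReal.ofReal (pInd h u))
    + (ENNReal.ofReal (sfun h)) • Measure.dirac 2

/-- the measure `Q` -/
noncomputable def Qmeas : Measure ℝ := volume.restrict (Ioo (0:ℝ) 1)

include hant hbnd in
lemma sfun_le_one : sfun h ≤ 1 := le_trans (sfun_le hant hbnd one_pos) (hbnd 1 one_pos).1.2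

lemma Pmeas_apply {E : Set ℝ} (hE : MeasurableSet E) :
    Pmeas h E = (∫⁻ u in E ∩ Ioo (0:ℝ) 1, ENNReal.ofReal (pInd h u))
      + ENNReal.ofReal (sfun h) * E.indicator (fun _ => (1:ℝ≥0∞)) 2 := by
  rw [Pmeas, Measure.add_apply, withDensity_apply _ hE, Measure.restrict_restrict hE,
    Measure.smul_apply, Measure.dirac_apply' _ hE]
  rfl

lemma Qmeas_apply {E : Set ℝ} (hE : MeasurableSet E) : Qmeas E = volume (E ∩ Ioo (0:ℝ) 1) :=
  Measure.restrict_apply hE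

instance : IsProbabilityMeasure Qmeas := by
  constructor
  rw [Qmeas, Measure.restrict_apply MeasurableSet.univ, univ_inter, Real.volume_Ioo]
  norm_num

include hcvx hant hlim hbnd in
lemma Pmeas_prob : IsProbabilityMeasure (Pmeas h) := by
  constructor
  rw [Pmeas_apply MeasurableSet.univ, univ_inter, total_mass hcvx hant hlim hbnd]
  rw [indicator_of_mem (mem_univ 2)]
  have h0 : 0 ≤ sfun h := sfun_nonneg hbnd
  have h1 : sfun h ≤ 1 := sfun_le_one hant hbnd
  rw [mul_one, ← ENNReal.ofReal_add (by linarith) h0]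
  norm_num

include hcvx hant hlim hbnd in
lemma lint_pInd_inter_le {x : ℝ} (hx : 0 < x) (A : Set ℝ) (hA : A ⊆ Ioo (0:ℝ) 1) :
    ∫⁻ u in A, ENNReal.ofReal (pInd h u)
      ≤ ENNReal.ofReal (h x - sfun h) + ENNReal.ofReal x * volume A := by
  calc ∫⁻ u in A, ENNReal.ofReal (pInd h u)
      ≤ ∫⁻ u in A, (ENNReal.ofReal (pInd h u - x) + ENNReal.ofReal x) :=
        lintegral_mono fun u => ofReal_le_sub_add _ _ hx.le
    _ = (∫⁻ u in A, ENNReal.ofReal (pInd h u - x)) + ENNReal.ofReal x * volume A := by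
        rw [lintegral_add_right _ measurable_const, setLIntegral_const]
    _ ≤ ENNReal.ofReal (h x - sfun h) + ENNReal.ofReal x * volume A := by
        gcongr
        refine le_trans (lintegral_mono_set hA) ?_
        rw [layer_cake hcvx hant hlim hbnd hx]

include hcvx hant hlim hbnd in
lemma Pmeas_le {x : ℝ} (hx : 0 < x) {E : Set ℝ} (hE : MeasurableSet E) :
    Pmeas h E ≤ ENNReal.ofReal (h x - sfun h)
      + ENNReal.ofReal x * volume (E ∩ Ioo (0:ℝ) 1) + ENNReal.ofReal (sfun h) := by
  rw [Pmeas_apply hE]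
  have h2 : E.indicator (fun _ => (1:ℝ≥0∞)) 2 ≤ 1 := by
    rcases em (2 ∈ E) with hm | hm
    · rw [indicator_of_mem hm]
    · rw [indicator_of_notMem hm]; exact zero_le'
  calc _ ≤ (ENNReal.ofReal (h x - sfun h) + ENNReal.ofReal x * volume (E ∩ Ioo (0:ℝ) 1))
        + ENNReal.ofReal (sfun h) * 1 := by
        gcongr
        exact lint_pInd_inter_le hcvx hant hlim hbnd hx _ inter_subset_right
    _ = _ := by rw [mul_one]

include hcvx hant hlim hbnd in
lemma Pmeas_E0 {x : ℝ} (hx : 0 < x) :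
    Pmeas h ({u : ℝ | x < pInd h u} ∪ {2})
      = ENNReal.ofReal (h x - sfun h) + ENNReal.ofReal x * volume {u : ℝ | x < pInd h u}
        + ENNReal.ofReal (sfun h) := by
  set B := {u : ℝ | x < pInd h u} with hB
  have hBm : MeasurableSet B := pInd_measurable hcvx hant hlim hbnd measurableSet_Ioi
  have hBI : B ⊆ Ioo (0:ℝ) 1 := by
    intro u hu
    simp only [hB, mem_setOf_eq, pInd] at hu
    by_contra hmem
    rw [indicator_of_notMem hmem] at hu
    linarith
  have hE0m : MeasurableSet (B ∪ {2}) := hBm.union (measurableSet_singleton 2)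
  rw [Pmeas_apply hE0m]
  have h2I : (2:ℝ) ∉ Ioo (0:ℝ) 1 := by norm_num
  have hinter : (B ∪ {2}) ∩ Ioo (0:ℝ) 1 = B := by
    rw [union_inter_distrib_right, inter_eq_self_of_subset_left hBI]
    have : ({2} : Set ℝ) ∩ Ioo (0:ℝ) 1 = ∅ := by
      rw [singleton_inter_eq_empty]; exact h2I
    rw [this, union_empty]
  rw [hinter]
  have hmem2 : (2:ℝ) ∈ B ∪ {2} := mem_union_right _ rfl
  rw [indicator_of_mem hmem2, mul_one]
  congr 1
  have hsplit : ∫⁻ u in B, ENNReal.ofReal (pInd h u)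
      = (∫⁻ u in B, ENNReal.ofReal (pInd h u - x)) + ENNReal.ofReal x * volume B := by
    have : ∀ u ∈ B, ENNReal.ofReal (pInd h u)
        = ENNReal.ofReal (pInd h u - x) + ENNReal.ofReal x := by
      intro u hu
      simp only [hB, mem_setOf_eq] at hu
      rw [← ENNReal.ofReal_add (by linarith) hx.le, sub_add_cancel]
    rw [setLIntegral_congr_fun hBm this,
      lintegral_add_right _ measurable_const, setLIntegral_const]
  rw [hsplit]
  congr 1
  have hzero : ∫⁻ u in Ioo (0:ℝ) 1 \ B, ENNReal.ofReal (pInd h u - x) = 0 := by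
    rw [setLIntegral_congr_fun (measurableSet_Ioo.diff hBm)
      (fun u hu => ?_), lintegral_zero]
    have : pInd h u ≤ x := by
      by_contra hc
      exact hu.2 (by simp only [hB, mem_setOf_eq]; linarith)
    exact ENNReal.ofReal_eq_zero.2 (by linarith)
  have hunion : Ioo (0:ℝ) 1 = B ∪ (Ioo (0:ℝ) 1 \ B) := (union_diff_cancel hBI).symm
  calc ∫⁻ u in B, ENNReal.ofReal (pInd h u - x)
      = (∫⁻ u in B, ENNReal.ofReal (pInd h u - x))
        + ∫⁻ u in Ioo (0:ℝ) 1 \ B, ENNReal.ofReal (pInd h u - x) := by rw [hzero, add_zero]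
    _ = ∫⁻ u in Ioo (0:ℝ) 1, ENNReal.ofReal (pInd h u - x) := by
        rw [← lintegral_union (measurableSet_Ioo.diff hBm) disjoint_sdiff_right, ← hunion]
    _ = ENNReal.ofReal (h x - sfun h) := layer_cake hcvx hant hlim hbnd hx

include hcvx hant hlim hbnd in
lemma hsDiv_eq_h {x : ℝ} (hx : 0 < x) : hsDiv x (Pmeas h) Qmeas = h x := by
  have hs0 : 0 ≤ sfun h := sfun_nonneg hbnd
  have hs1 : sfun h ≤ h x := sfun_le hant hbnd hx
  have hvolI : volume (Ioo (0:ℝ) 1) = 1 := by rw [Real.volume_Ioo]; norm_num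
  have hvol_le : ∀ A : Set ℝ, A ⊆ Ioo (0:ℝ) 1 → volume A ≠ ⊤ := by
    intro A hA
    refine ne_top_of_le_ne_top ?_ (measure_mono hA)
    rw [hvolI]; exact ENNReal.one_ne_top
  have htoReal : ∀ w : ℝ≥0∞, w ≠ ⊤ →
      (ENNReal.ofReal (h x - sfun h) + ENNReal.ofReal x * w + ENNReal.ofReal (sfun h)).toReal
        = (h x - sfun h) + x * w.toReal + sfun h := by
    intro w hw
    rw [ENNReal.toReal_add (by finiteness) (by finiteness),
      ENNReal.toReal_add (by finiteness) (by finiteness),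
      ENNReal.toReal_mul, ENNReal.toReal_ofReal (by linarith),
      ENNReal.toReal_ofReal hx.le, ENNReal.toReal_ofReal hs0]
  have hupper : ∀ E : {E : Set ℝ // MeasurableSet E},
      ((Pmeas h) E).toReal - x * ((Qmeas) E).toReal ≤ h x := by
    rintro ⟨E, hE⟩
    have hPle := Pmeas_le hcvx hant hlim hbnd hx hE
    have hvE : volume (E ∩ Ioo (0:ℝ) 1) ≠ ⊤ := hvol_le _ inter_subset_right
    have hBne : ENNReal.ofReal (h x - sfun h) + ENNReal.ofReal x * volume (E ∩ Ioo (0:ℝ) 1)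
        + ENNReal.ofReal (sfun h) ≠ ⊤ := by finiteness
    have h1 : ((Pmeas h) E).toReal ≤ (h x - sfun h)
        + x * (volume (E ∩ Ioo (0:ℝ) 1)).toReal + sfun h := by
      rw [← htoReal _ hvE]
      exact ENNReal.toReal_mono hBne hPle
    have h2 : ((Qmeas) E).toReal = (volume (E ∩ Ioo (0:ℝ) 1)).toReal := by
      rw [Qmeas_apply hE]
    simp only
    rw [h2]
    linarith
  have hbdd : BddAbove (range fun E : {E : Set ℝ // MeasurableSet E} =>
      ((Pmeas h) E).toReal - x * ((Qmeas) E).toReal) := by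
    refine ⟨h x, ?_⟩
    rintro y ⟨E, rfl⟩
    exact hupper E
  refine le_antisymm (ciSup_le hupper) ?_
  set B := {u : ℝ | x < pInd h u} with hB
  have hBm : MeasurableSet B := pInd_measurable hcvx hant hlim hbnd measurableSet_Ioi
  have hBI : B ⊆ Ioo (0:ℝ) 1 := by
    intro u hu
    simp only [hB, mem_setOf_eq, pInd] at hu
    by_contra hmem
    rw [indicator_of_notMem hmem] at hu
    linarith
  have hE0m : MeasurableSet (B ∪ {2}) := hBm.union (measurableSet_singleton 2)
  have hQE0 : (Qmeas) (B ∪ {2}) = volume B := by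
    rw [Qmeas_apply hE0m, union_inter_distrib_right, inter_eq_self_of_subset_left hBI]
    have h2I : ({2} : Set ℝ) ∩ Ioo (0:ℝ) 1 = ∅ := by
      rw [singleton_inter_eq_empty]; norm_num
    rw [h2I, union_empty]
  have hvB : volume B ≠ ⊤ := hvol_le _ hBI
  have hval : ((Pmeas h) (B ∪ {2})).toReal - x * ((Qmeas) (B ∪ {2})).toReal = h x := by
    rw [Pmeas_E0 hcvx hant hlim hbnd hx, hQE0, htoReal _ hvB]
    ring
  refine le_trans (le_of_eq hval.symm) (le_ciSup hbdd ⟨B ∪ {2}, hE0m⟩)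

end Bwd

/-- A function `h` on `(0, ∞)` is the hockey-stick curve `x ↦ H_x(P‖Q)` of some pair of
probability distributions iff it is convex, decreasing, tends to `1` at `0⁺`, takes values
in `[0,1]`, and satisfies `h x ≥ 1 - x`. -/
theorem stmt2 (h : ℝ → ℝ) :
    (∃ (Ω : Type) (_ : MeasurableSpace Ω) (P Q : Measure Ω),
        IsProbabilityMeasure P ∧ IsProbabilityMeasure Q ∧ ∀ x > 0, h x = hsDiv x P Q) ↔
      (ConvexOn ℝ (Set.Ioi 0) h ∧ AntitoneOn h (Set.Ioi 0) ∧
        Tendsto h (nhdsWithin 0 (Set.Ioi 0)) (nhds 1) ∧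
        ∀ x > 0, h x ∈ Set.Icc (0 : ℝ) 1 ∧ 1 - x ≤ h x) := by
  constructor
  · rintro ⟨Ω, mΩ, P, Q, hP, hQ, heq⟩
    haveI := hP; haveI := hQ
    have hconv := hsDiv_convex P Q
    refine ⟨⟨convex_Ioi 0, fun a ha b hb p q hp hq hpq => ?_⟩,
      fun a ha b hb hab => ?_, ?_, fun x hx => ⟨⟨?_, ?_⟩, ?_⟩⟩
    · have hm : p • a + q • b ∈ Ioi 0 := (convex_Ioi 0) ha hb hp hq hpq
      rw [heq _ (mem_Ioi.1 hm), heq _ (mem_Ioi.1 ha), heq _ (mem_Ioi.1 hb)]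
      exact hconv.2 ha hb hp hq hpq
    · rw [heq _ (mem_Ioi.1 ha), heq _ (mem_Ioi.1 hb)]
      exact hsDiv_antitone P Q (mem_Ioi.1 ha) hab
    · have hg : Tendsto (fun y : ℝ => 1 - y) (nhdsWithin 0 (Set.Ioi 0)) (nhds 1) := by
        have : Tendsto (fun y : ℝ => 1 - y) (nhdsWithin 0 (Set.Ioi 0)) (nhds (1 - 0)) :=
          tendsto_const_nhds.sub (tendsto_id.mono_left nhdsWithin_le_nhds)
        simpa using this
      refine tendsto_of_tendsto_of_tendsto_of_le_of_le' hg tendsto_const_nhds ?_ ?_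
      · filter_upwards [self_mem_nhdsWithin] with y hy
        rw [heq y (mem_Ioi.1 hy)]
        exact hsDiv_ge_one_sub P Q y (mem_Ioi.1 hy)
      · filter_upwards [self_mem_nhdsWithin] with y hy
        rw [heq y (mem_Ioi.1 hy)]
        exact hsDiv_le_one P Q y (mem_Ioi.1 hy)
    · rw [heq x hx]; exact hsDiv_nonneg P Q x hx
    · rw [heq x hx]; exact hsDiv_le_one P Q x hx
    · rw [heq x hx]; exact hsDiv_ge_one_sub P Q x hx
  · rintro ⟨hcvx, hant, hlim, hbnd⟩
    exact ⟨ℝ, inferInstance, Pmeas h, Qmeas, Pmeas_prob hcvx hant hlim hbnd, inferInstance,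
      fun x hx => (hsDiv_eq_h hcvx hant hlim hbnd hx).symm⟩
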